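/- Let a ∈ F_q^× and let g ∈ F_q^× have multiplicative order s. Then | Σ_{x=0}^{s−1} ψ(a g^{x}) | ≤ √q; equivalently, the absolute value of the sum of ψ over any coset a·⟨g⟩ of the cyclic subgroup generated by g is at most √q. -/

import Mathlib

/-- Let `F` be the finite field with `q = p^ν` elements, `ψ` a nontrivial additive
character of `F`, `a ∈ Fˣ`, and `g ∈ Fˣ` of multiplicative order `s`.  Then
`|Σ_{x=0}^{s−1} ψ(a·g^x)| ≤ √q`, i.e. the absolute value of the sum of `ψ` over the
coset `a·⟨g⟩` is at most `√q`. -/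
theorem statement6 (p ν : ℕ) (hp : p.Prime) (hν : 1 ≤ ν)
    (F : Type*) [Field F] [Fintype F]
    (hq : Fintype.card F = p ^ ν)
    (ψ : AddChar F ℂ) (hψ : ψ ≠ 1)
    (a g : Fˣ) :
    ‖∑ x ∈ Finset.range (orderOf g), ψ ((a : F) * (g : F) ^ x)‖ ≤
      Real.sqrt (Fintype.card F) := by
  classical
  set n := orderOf g with hn
  have hn0 : 0 < n := orderOf_pos g
  have hog : orderOf (g : F) = n := orderOf_units
  have hgF : (g : F) ≠ 0 := g.ne_zero
  set H : Finset F := (Finset.range n).image (fun x => (g : F) ^ x) with hH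
  have hinj : Set.InjOn (fun x => (g : F) ^ x) (Finset.range n) := by
    intro i hi j hj hij
    refine pow_injOn_Iio_orderOf ?_ ?_ hij
    · simpa [hog] using Finset.mem_range.mp hi
    · simpa [hog] using Finset.mem_range.mp hj
  have hcard : H.card = n := by
    rw [hH, Finset.card_image_of_injOn hinj, Finset.card_range]
  have hHne : ∀ h ∈ H, h ≠ 0 := by
    intro h hh
    rcases Finset.mem_image.mp hh with ⟨i, _, rfl⟩
    exact pow_ne_zero _ hgF
  -- multiplication by an element of H permutes H
  have hperm : ∀ h0 ∈ H, H.image (fun h => h0 * h) = H := by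
    intro h0 hh0
    have hsub : H.image (fun h => h0 * h) ⊆ H := by
      intro y hy
      rcases Finset.mem_image.mp hy with ⟨h, hh, rfl⟩
      rcases Finset.mem_image.mp hh with ⟨i, hi, rfl⟩
      rcases Finset.mem_image.mp hh0 with ⟨j, hj, rfl⟩
      refine Finset.mem_image.mpr ⟨(j + i) % n, Finset.mem_range.mpr (Nat.mod_lt _ hn0), ?_⟩
      have := pow_mod_orderOf (g : F) (j + i)
      rw [hog] at this
      rw [this, pow_add]
    have hinj2 : Set.InjOn (fun h => h0 * h) H :=
      fun x _ y _ hxy => mul_left_cancel₀ (hHne h0 hh0) hxy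
    have hcard2 : (H.image (fun h => h0 * h)).card = H.card :=
      Finset.card_image_of_injOn hinj2
    exact Finset.eq_of_subset_of_card_le hsub hcard2.ge
  set S : F → ℂ := fun b => ∑ h ∈ H, ψ (b * h) with hS
  have hSa : ∑ x ∈ Finset.range n, ψ ((a : F) * (g : F) ^ x) = S a := by
    show _ = ∑ h ∈ H, ψ ((a : F) * h)
    rw [hH, Finset.sum_image (fun x hx y hy h => hinj hx hy h)]
  -- S is invariant under multiplying the argument by an element of H
  have hinv : ∀ h0 ∈ H, ∀ b : F, S (b * h0) = S b := by
    intro h0 hh0 b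
    have : ∑ h ∈ H, ψ (b * h) = ∑ h ∈ H.image (fun h => h0 * h), ψ (b * h) := by
      rw [hperm h0 hh0]
    show ∑ h ∈ H, ψ (b * h0 * h) = ∑ h ∈ H, ψ (b * h)
    rw [this, Finset.sum_image (fun x _ y _ hxy => mul_left_cancel₀ (hHne h0 hh0) hxy)]
    refine Finset.sum_congr rfl fun h _ => ?_
    ring_nf
  -- Parseval identity
  have hprim : ψ.IsPrimitive := AddChar.IsPrimitive.of_ne_one hψ
  have hcharpos : 0 < ringChar F :=
    Nat.pos_of_ne_zero (CharP.ringChar_ne_zero_of_finite F)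
  have key : ∑ b : F, S b * (starRingEnd ℂ) (S b) = (Fintype.card F : ℂ) * n := by
    have conjS : ∀ b : F, (starRingEnd ℂ) (S b) = ∑ h' ∈ H, ψ (b * (-h')) := by
      intro b
      show _ = _
      rw [show S b = ∑ h ∈ H, ψ (b * h) from rfl, map_sum]
      refine Finset.sum_congr rfl fun h' _ => ?_
      rw [AddChar.starComp_apply hcharpos, AddChar.inv_apply, ← neg_mul, neg_mul_comm]
    calc ∑ b : F, S b * (starRingEnd ℂ) (S b)
        = ∑ b : F, ∑ h ∈ H, ∑ h' ∈ H, ψ ((h - h') * b) := by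
          refine Finset.sum_congr rfl fun b _ => ?_
          rw [conjS, show S b = ∑ h ∈ H, ψ (b * h) from rfl, Finset.sum_mul_sum]
          refine Finset.sum_congr rfl fun h _ => Finset.sum_congr rfl fun h' _ => ?_
          rw [← AddChar.map_add_eq_mul]
          congr 1; ring
      _ = ∑ h ∈ H, ∑ h' ∈ H, ∑ b : F, ψ (b * (h - h')) := by
          rw [Finset.sum_comm]
          refine Finset.sum_congr rfl fun h _ => ?_
          rw [Finset.sum_comm]
          refine Finset.sum_congr rfl fun h' _ => Finset.sum_congr rfl fun b _ => ?_
          rw [mul_comm]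
      _ = ∑ h ∈ H, ∑ h' ∈ H, if h - h' = 0 then (Fintype.card F : ℂ) else 0 := by
          refine Finset.sum_congr rfl fun h _ => Finset.sum_congr rfl fun h' _ => ?_
          rw [AddChar.sum_mulShift _ hprim]
          simp [apply_ite (Nat.cast : ℕ → ℂ)]
      _ = (Fintype.card F : ℂ) * n := by
          simp only [sub_eq_zero]
          rw [Finset.sum_comm]
          have : ∀ h' ∈ H, (∑ h ∈ H, if h = h' then (Fintype.card F : ℂ) else 0)
              = (Fintype.card F : ℂ) := by
            intro h' hh'
            rw [Finset.sum_ite_eq' H h' (fun _ => (Fintype.card F : ℂ))]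
            simp [hh']
          rw [Finset.sum_congr rfl this, Finset.sum_const, hcard, nsmul_eq_mul, mul_comm]
  -- real version of Parseval
  have keyR : ∑ b : F, Complex.normSq (S b) = (Fintype.card F : ℝ) * n := by
    have : ((∑ b : F, Complex.normSq (S b) : ℝ) : ℂ) = ((Fintype.card F : ℝ) * n : ℝ) := by
      push_cast
      rw [← key]
      exact Finset.sum_congr rfl fun b _ => (Complex.mul_conj (S b)).symm
    exact_mod_cast this
  -- the coset a·H
  set C : Finset F := H.image (fun h => (a : F) * h) with hC
  have hCinj : Set.InjOn (fun h => (a : F) * h) H := fun x _ y _ hxy =>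
    mul_left_cancel₀ a.ne_zero hxy
  have hCcard : C.card = n := by
    rw [hC, Finset.card_image_of_injOn hCinj, hcard]
  have hCval : ∀ b ∈ C, Complex.normSq (S b) = Complex.normSq (S a) := by
    intro b hb
    rcases Finset.mem_image.mp hb with ⟨h, hh, rfl⟩
    rw [hinv h hh]
  have hsum_coset : ∑ b ∈ C, Complex.normSq (S b) = n * Complex.normSq (S a) := by
    rw [Finset.sum_congr rfl hCval, Finset.sum_const, hCcard, nsmul_eq_mul]
  have hle : (n : ℝ) * Complex.normSq (S a) ≤ (Fintype.card F : ℝ) * n := by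
    rw [← hsum_coset, ← keyR]
    exact Finset.sum_le_sum_of_subset_of_nonneg (Finset.subset_univ C)
      (fun b _ _ => Complex.normSq_nonneg _)
  have hnormSq : Complex.normSq (S a) ≤ (Fintype.card F : ℝ) := by
    have hn' : (0 : ℝ) < n := by exact_mod_cast hn0
    nlinarith
  rw [hn] at *
  rw [hSa]
  rw [← Complex.sq_norm] at hnormSq
  have habs : (0 : ℝ) ≤ ‖S a‖ := norm_nonneg _
  calc ‖S a‖ = Real.sqrt ((‖S a‖) ^ 2) := by
        rw [Real.sqrt_sq habs]
    _ ≤ Real.sqrt (Fintype.card F) := Real.sqrt_le_sqrt hnormSq
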